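/- Let v > 0 and r > 0 be real numbers and define f : ℝ → ℂ by f(θ) = v·r·cos θ − i·r·sin θ, the restriction of the surface effective Hamiltonian h_surface(kx, ky) = v·kx − i·ky to the counterclockwise circle of radius r around the origin of the surface Brillouin zone. Then f(θ) ≠ 0 for all θ, and ∫₀^{2π} (deriv f θ) / f(θ) dθ = −2πi; equivalently, the 1D winding number w₁ = −(1/(2πi)) ∫₀^{2π} f(θ)⁻¹ · (deriv f θ) dθ of the surface state around its Fermi point equals 1. -/

import Mathlib

open Real Complex intervalIntegral

/-- For `v, r > 0`, the restriction `f(θ) = v·r·cos θ − i·r·sin θ` of the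
surface effective Hamiltonian `h_surface(kx, ky) = v·kx − i·ky` to the counterclockwise circle
of radius `r` around the origin is nowhere zero, and
`∫₀^{2π} f'(θ)/f(θ) dθ = −2πi`; equivalently, the 1D winding number
`w₁ = −(1/(2πi)) ∫₀^{2π} f(θ)⁻¹ · f'(θ) dθ` equals `1`. -/
theorem surface_state_winding_number_one
    (v r : ℝ) (hv : 0 < v) (hr : 0 < r) (f : ℝ → ℂ)
    (hf : ∀ θ : ℝ, f θ = ((v * r * Real.cos θ : ℝ) : ℂ) - Complex.I * ((r * Real.sin θ : ℝ) : ℂ)) :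
    (∀ θ : ℝ, f θ ≠ 0) ∧
    (∫ θ in (0 : ℝ)..(2 * Real.pi), deriv f θ / f θ) = -(2 * Real.pi * Complex.I) ∧
    -(1 / (2 * Real.pi * Complex.I)) *
      (∫ θ in (0 : ℝ)..(2 * Real.pi), (f θ)⁻¹ * deriv f θ) = 1 := by
  have hfe : f = fun θ => ((v * r * Real.cos θ : ℝ) : ℂ) - Complex.I * ((r * Real.sin θ : ℝ) : ℂ) :=
    funext hf
  subst hfe
  set f : ℝ → ℂ := fun θ => ((v * r * Real.cos θ : ℝ) : ℂ) - Complex.I * ((r * Real.sin θ : ℝ) : ℂ)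
    with hfdef
  -- nonvanishing
  have hne : ∀ θ : ℝ, f θ ≠ 0 := by
    intro θ h
    have hre := congrArg Complex.re h
    have him := congrArg Complex.im h
    simp [hfdef, Complex.cos_ofReal_re, Complex.sin_ofReal_re] at hre him
    have hc : Real.cos θ = 0 := by
      rcases hre with (h' | h') | h'
      · exact absurd h' hv.ne'
      · exact absurd h' hr.ne'
      · exact h'
    have hs : Real.sin θ = 0 := by
      rcases him with h' | h'
      · exact absurd h' hr.ne'
      · exact h'
    have := Real.sin_sq_add_cos_sq θ
    rw [hc, hs] at this
    norm_num at this
  -- explicit derivative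
  set f' : ℝ → ℂ := fun θ => ((-(v * r * Real.sin θ) : ℝ) : ℂ) - Complex.I * ((r * Real.cos θ : ℝ) : ℂ)
    with hf'def
  have hd : ∀ θ : ℝ, HasDerivAt f (f' θ) θ := by
    intro θ
    have h1 : HasDerivAt (fun t : ℝ => ((v * r * Real.cos t : ℝ) : ℂ))
        ((-(v * r * Real.sin θ) : ℝ) : ℂ) θ := by
      have := ((Real.hasDerivAt_cos θ).const_mul (v * r)).ofReal_comp
      simpa [mul_comm, mul_left_comm, mul_assoc] using this
    have h2 : HasDerivAt (fun t : ℝ => Complex.I * ((r * Real.sin t : ℝ) : ℂ))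
        (Complex.I * ((r * Real.cos θ : ℝ) : ℂ)) θ := by
      have := (((Real.hasDerivAt_sin θ).const_mul r).ofReal_comp).const_mul Complex.I
      simpa [mul_comm, mul_left_comm, mul_assoc] using this
    exact h1.sub h2
  have hderiv : deriv f = f' := funext fun θ => (hd θ).deriv
  -- auxiliary curve in the right half-plane
  set u : ℝ → ℂ := fun θ => f θ * Complex.exp (θ * Complex.I) with hudef
  have hure : ∀ θ : ℝ, 0 < (u θ).re := by
    intro θ
    have h1 : (u θ).re = v * r * Real.cos θ ^ 2 + r * Real.sin θ ^ 2 := by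
      simp [hudef, hfdef, Complex.mul_re, Complex.exp_ofReal_mul_I_re,
        Complex.exp_ofReal_mul_I_im, Complex.cos_ofReal_re, Complex.sin_ofReal_re]
      ring
    rw [h1]
    rcases eq_or_lt_of_le (sq_nonneg (Real.cos θ)) with hc | hc
    · have hs : Real.sin θ ^ 2 = 1 := by nlinarith [Real.sin_sq_add_cos_sq θ]
      nlinarith [mul_pos hv hr]
    · nlinarith [mul_pos (mul_pos hv hr) hc, mul_nonneg hr.le (sq_nonneg (Real.sin θ))]
  have huslit : ∀ θ : ℝ, u θ ∈ Complex.slitPlane := fun θ => Or.inl (hure θ)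
  have hexp : ∀ θ : ℝ, HasDerivAt (fun t : ℝ => Complex.exp ((t : ℂ) * Complex.I))
      (Complex.exp ((θ : ℂ) * Complex.I) * Complex.I) θ := by
    intro θ
    have : HasDerivAt (fun w : ℂ => Complex.exp (w * Complex.I))
        (Complex.exp ((θ : ℂ) * Complex.I) * Complex.I) (θ : ℂ) := by
      simpa using ((hasDerivAt_id ((θ : ℝ) : ℂ)).mul_const Complex.I).cexp
    exact this.comp_ofReal
  have hu : ∀ θ : ℝ, HasDerivAt u (f' θ * Complex.exp ((θ : ℂ) * Complex.I)
      + f θ * (Complex.exp ((θ : ℂ) * Complex.I) * Complex.I)) θ := by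
    intro θ
    exact (hd θ).mul (hexp θ)
  -- antiderivative of f'/f
  set G : ℝ → ℂ := fun θ => Complex.log (u θ) - Complex.I * θ with hGdef
  have hG : ∀ θ : ℝ, HasDerivAt G (f' θ / f θ) θ := by
    intro θ
    have hlog := ((hu θ).clog_real (huslit θ))
    have hlin : HasDerivAt (fun t : ℝ => Complex.I * (t : ℂ)) Complex.I θ := by
      simpa using ((hasDerivAt_id θ).ofReal_comp).const_mul Complex.I
    have := hlog.sub hlin
    convert this using 1
    · rfl
    · rfl
    have hexpne : Complex.exp ((θ : ℂ) * Complex.I) ≠ 0 := Complex.exp_ne_zero _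
    simp only [hudef]
    have h := hne θ
    field_simp
    try ring
  -- continuity / integrability
  have hcont : Continuous fun θ : ℝ => f' θ / f θ := by
    apply Continuous.div
    · fun_prop
    · fun_prop
    · exact hne
  have hint : IntervalIntegrable (fun θ : ℝ => f' θ / f θ) MeasureTheory.volume 0 (2 * Real.pi) :=
    hcont.intervalIntegrable _ _
  have hkey : (∫ θ in (0 : ℝ)..(2 * Real.pi), f' θ / f θ) = G (2 * Real.pi) - G 0 :=
    intervalIntegral.integral_eq_sub_of_hasDerivAt (fun θ _ => hG θ) hint
  have hu2pi : u (2 * Real.pi) = u 0 := by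
    simp only [hudef, hfdef]
    rw [Real.cos_two_pi, Real.sin_two_pi, Real.cos_zero, Real.sin_zero,
      show ((2 * Real.pi : ℝ) : ℂ) * Complex.I = 2 * ↑Real.pi * Complex.I by push_cast; ring,
      Complex.exp_two_pi_mul_I]
    norm_num
  have hGval : G (2 * Real.pi) - G 0 = -(2 * Real.pi * Complex.I) := by
    rw [hGdef]
    simp only [hu2pi]
    push_cast
    ring
  have hmain : (∫ θ in (0 : ℝ)..(2 * Real.pi), deriv f θ / f θ) = -(2 * Real.pi * Complex.I) := by
    rw [hderiv, hkey, hGval]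
  refine ⟨hne, hmain, ?_⟩
  have heq : (∫ θ in (0 : ℝ)..(2 * Real.pi), (f θ)⁻¹ * deriv f θ)
      = ∫ θ in (0 : ℝ)..(2 * Real.pi), deriv f θ / f θ := by
    apply intervalIntegral.integral_congr
    intro θ _
    show (f θ)⁻¹ * deriv f θ = deriv f θ / f θ
    rw [div_eq_mul_inv, mul_comm]
  rw [heq, hmain]
  have hpi : (Real.pi : ℂ) ≠ 0 := Complex.ofReal_ne_zero.2 Real.pi_ne_zero
  field_simp
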